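/- Let {H_n} be a Positive Linear Recurrence Sequence with length L and size S. For n > 2L and 0 ≤ t < S, the probability that the second-to-last block has size t satisfies P(Z_n = t) = (H_{n−ℓ(t)+1} − H_{n−ℓ(t)})/(H_{n+1} − H_n). -/

import Mathlib

open scoped BigOperators
open Filter

/-- A Positive Linear Recurrence Sequence (PLRS): a sequence `H` of positive integers
satisfying `H (n+1) = c 1 * H n + ⋯ + c L * H (n+1-L)` for `n ≥ L`, with
`H 1 = 1` and initial conditions `H (n+1) = c 1 * H n + ⋯ + c n * H 1 + 1` for `1 ≤ n < L`. -/
structure PLRS where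
  /-- the length of the recurrence -/
  L : ℕ
  /-- the coefficients of the recurrence (indexed from 1) -/
  c : ℕ → ℕ
  /-- the sequence itself (indexed from 1) -/
  H : ℕ → ℕ
  L_pos : 0 < L
  c1_pos : 0 < c 1
  cL_pos : 0 < c L
  H_pos : ∀ n, 1 ≤ n → 0 < H n
  H_one : H 1 = 1
  H_rec : ∀ n, L ≤ n → H (n + 1) = ∑ i ∈ Finset.Icc 1 L, c i * H (n + 1 - i)
  H_init : ∀ n, 1 ≤ n → n < L → H (n + 1) = (∑ i ∈ Finset.Icc 1 n, c i * H (n + 1 - i)) + 1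

namespace PLRS

/-- The size `S = c 1 + ⋯ + c L` of a PLRS. -/
def size (P : PLRS) : ℕ := ∑ i ∈ Finset.Icc 1 P.L, P.c i

/-- Legality of a coefficient sequence `(a_1, …, a_m)` (as a list), not including the
requirement `a_1 > 0`: either (Condition 1) `m < L` and `a_i = c_i` for all `i`, or
(Condition 2) there is `s ∈ {1, …, L}` with `a_1 = c_1, …, a_{s-1} = c_{s-1}`, `a_s < c_s`,
and `(a_{s+1}, …, a_m)` legal (possibly empty). -/
inductive IsLegal (P : PLRS) : List ℕ → Prop
  | cond1 (m : ℕ) (h1 : 1 ≤ m) (h2 : m < P.L) :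
      IsLegal P ((List.range m).map fun i => P.c (i + 1))
  | cond2 (s : ℕ) (hs1 : 1 ≤ s) (hs2 : s ≤ P.L) (a : ℕ) (ha : a < P.c s)
      (rest : List ℕ) (hrest : IsLegal P rest) :
      IsLegal P (((List.range (s - 1)).map fun i => P.c (i + 1)) ++ a :: rest)
  | cond2_last (s : ℕ) (hs1 : 1 ≤ s) (hs2 : s ≤ P.L) (a : ℕ) (ha : a < P.c s) :
      IsLegal P (((List.range (s - 1)).map fun i => P.c (i + 1)) ++ [a])

/-- A legal decomposition: a legal coefficient sequence with `a_1 > 0`. -/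
def LegalDecomp (P : PLRS) (l : List ℕ) : Prop := P.IsLegal l ∧ 0 < l.headI

/-- The value `∑_{i=1}^m a_i H_{m+1-i}` of a coefficient sequence `(a_1, …, a_m)`. -/
def value (P : PLRS) (l : List ℕ) : ℕ :=
  ∑ i ∈ Finset.range l.length, l.getD i 0 * P.H (l.length - i)

/-- `Ω_n`: the set of legal decompositions of integers in `[H_n, H_{n+1})`. -/
def Omega (P : PLRS) (n : ℕ) : Set (List ℕ) :=
  {l | P.LegalDecomp l ∧ P.H n ≤ P.value l ∧ P.value l < P.H (n + 1)}

/-- Expectation of `g` under the uniform probability measure on a (finite) set `A`. -/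
noncomputable def expectOn (A : Set (List ℕ)) (g : List ℕ → ℝ) : ℝ :=
  (∑ᶠ l ∈ A, g l) / (A.ncard : ℝ)

/-- Variance of `g` under the uniform probability measure on a (finite) set `A`. -/
noncomputable def varOn (A : Set (List ℕ)) (g : List ℕ → ℝ) : ℝ :=
  expectOn A (fun l => g l ^ 2) - (expectOn A g) ^ 2

/-- Expectation of `g` under the uniform probability measure on `Ω_n`. -/
noncomputable def expect (P : PLRS) (n : ℕ) (g : List ℕ → ℝ) : ℝ := expectOn (P.Omega n) g

/-- Probability of the event `A` under the uniform probability measure on `Ω_n`. -/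
noncomputable def prob (P : PLRS) (n : ℕ) (A : Set (List ℕ)) : ℝ :=
  ((P.Omega n ∩ A).ncard : ℝ) / ((P.Omega n).ncard : ℝ)

/-- `E[K_n]`, the expected number of summands on `Ω_n`. -/
noncomputable def expectK (P : PLRS) (n : ℕ) : ℝ := P.expect n fun l => (l.sum : ℝ)

/-- `Var[K_n]`, the variance of the number of summands on `Ω_n`. -/
noncomputable def varK (P : PLRS) (n : ℕ) : ℝ := varOn (P.Omega n) fun l => (l.sum : ℝ)

/-- The first index (0-based) at which the coefficient list disagrees with `c`. -/
def firstMismatch (P : PLRS) (l : List ℕ) : Option ℕ :=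
  (List.range l.length).find? fun i => l.getD i 0 != P.c (i + 1)

/-- The block decomposition of a legal coefficient sequence: repeatedly split off the
Type 2 block `(c_1, …, c_{s-1}, a_s)` with `a_s ≠ c_s`; if the whole remaining sequence
agrees with `c` it is a single (Type 1) block. -/
def blocks (P : PLRS) (l : List ℕ) : List (List ℕ) :=
  if h : l = [] then []
  else
    match P.firstMismatch l with
    | none => [l]
    | some i => l.take (i + 1) :: P.blocks (l.drop (i + 1))
termination_by l.length
decreasing_by
  have hl : 0 < l.length := List.length_pos_iff.mpr h
  simp only [List.length_drop]
  omega

/-- The second-to-last block of a legal decomposition. -/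
def stlBlock (P : PLRS) (l : List ℕ) : List ℕ := ((P.blocks l).reverse).getD 1 []

/-- `Z_n(ω)`: the size (sum of coefficients) of the second-to-last block. -/
def Z (P : PLRS) (l : List ℕ) : ℕ := (P.stlBlock l).sum

/-- The length function `ℓ(t)`: the length of the Type 2 block of size `t`, i.e., the least
`s` with `t < c_1 + ⋯ + c_s`. -/
noncomputable def ell (P : PLRS) (t : ℕ) : ℕ :=
  sInf {s : ℕ | t < ∑ i ∈ Finset.Icc 1 s, P.c i}

/-- `L_n(ω) = ℓ(Z_n(ω))`: the length of the second-to-last block. -/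
noncomputable def Lfn (P : PLRS) (l : List ℕ) : ℕ := P.ell (P.Z l)

/-- `h_t`: remove the second-to-last block of a legal decomposition. -/
def removeSTL (P : PLRS) (l : List ℕ) : List ℕ :=
  ((((P.blocks l).reverse).eraseIdx 1).reverse).flatten

/-- The Type 2 block of size `t`: `(c_1, …, c_{ℓ(t)-1}, t - (c_1 + ⋯ + c_{ℓ(t)-1}))`. -/
noncomputable def type2Block (P : PLRS) (t : ℕ) : List ℕ :=
  ((List.range (P.ell t - 1)).map fun i => P.c (i + 1)) ++
    [t - ∑ i ∈ Finset.Icc 1 (P.ell t - 1), P.c i]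

/-- Insert the Type 2 block of size `t` immediately before the last block. -/
noncomputable def insertSTL (P : PLRS) (t : ℕ) (l : List ℕ) : List ℕ :=
  ((((P.blocks l).reverse).insertIdx 1 (P.type2Block t)).reverse).flatten

/-- A Type 1 block: `(c_1, …, c_m)` with `1 ≤ m < L`. -/
def IsType1Block (P : PLRS) (bl : List ℕ) : Prop :=
  ∃ m, 1 ≤ m ∧ m < P.L ∧ bl = (List.range m).map fun i => P.c (i + 1)

/-- A Type 2 block: `(c_1, …, c_{s-1}, a)` with `1 ≤ s ≤ L` and `a < c_s`. -/
def IsType2Block (P : PLRS) (bl : List ℕ) : Prop :=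
  ∃ s, 1 ≤ s ∧ s ≤ P.L ∧ ∃ a, a < P.c s ∧
    bl = ((List.range (s - 1)).map fun i => P.c (i + 1)) ++ [a]

/-- Conditional expectation of `g` on `Ω_n` given `Z_n = t`. -/
noncomputable def condExpect (P : PLRS) (n t : ℕ) (g : List ℕ → ℝ) : ℝ :=
  expectOn (P.Omega n ∩ {l | P.Z l = t}) g

end PLRS

open PLRS

namespace PLRS

variable (P : PLRS)

/-- the prefix `(c 1, …, c m)` as a list -/
def cpfx (m : ℕ) : List ℕ := (List.range m).map fun i => P.c (i + 1)

@[simp] lemma cpfx_zero : P.cpfx 0 = [] := by simp [cpfx]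

lemma cpfx_succ (m : ℕ) : P.cpfx (m + 1) = P.cpfx m ++ [P.c (m + 1)] := by
  simp [cpfx, List.range_succ]

@[simp] lemma cpfx_length (m : ℕ) : (P.cpfx m).length = m := by simp [cpfx]

lemma cpfx_getD {m j : ℕ} (h : j < m) : (P.cpfx m).getD j 0 = P.c (j + 1) := by
  rw [List.getD_eq_getElem _ _ (by simpa using h)]
  simp [cpfx]

lemma cpfx_head (m : ℕ) (h : 1 ≤ m) : P.cpfx m = P.c 1 :: ((List.range (m-1)).map fun i => P.c (i+2)) := by
  obtain ⟨k, rfl⟩ := Nat.exists_eq_add_of_le h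
  rw [Nat.add_comm]
  simp [cpfx, List.range_succ_eq_map, List.map_map, Function.comp]

/-- auxiliary recursive value function -/
def valAux (P : PLRS) : List ℕ → ℕ → ℕ
  | [], _ => 0
  | a :: l, n => a * P.H n + valAux P l (n - 1)

@[simp] lemma valAux_nil (n : ℕ) : P.valAux [] n = 0 := rfl

@[simp] lemma valAux_cons (a : ℕ) (l : List ℕ) (n : ℕ) :
    P.valAux (a :: l) n = a * P.H n + P.valAux l (n - 1) := rfl

lemma valAux_append (x y : List ℕ) (n : ℕ) :
    P.valAux (x ++ y) n = P.valAux x n + P.valAux y (n - x.length) := by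
  induction x generalizing n with
  | nil => simp
  | cons a x ih =>
      simp only [List.cons_append, valAux_cons, ih, List.length_cons]
      have : n - 1 - x.length = n - (x.length + 1) := by omega
      rw [this]
      ring

lemma value_eq_valAux (l : List ℕ) : P.value l = P.valAux l l.length := by
  suffices h : ∀ (l : List ℕ) (n : ℕ), l.length = n →
      (∑ i ∈ Finset.range l.length, l.getD i 0 * P.H (l.length - i)) = P.valAux l n by
    exact h l l.length rfl
  intro l
  induction l with
  | nil => intro n _; simp
  | cons a l ih =>
      intro n hn
      rw [List.length_cons] at hn
      subst hn
      rw [List.length_cons, Finset.sum_range_succ']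
      simp only [List.getD_cons_succ, List.getD_cons_zero, valAux_cons]
      rw [add_comm, Nat.add_sub_cancel]
      simp only [Nat.succ_sub_succ]
      congr 1
      exact ih l.length rfl

end PLRS
namespace PLRS

variable (P : PLRS)

/-- `Af n s = ∑_{i=1}^{s} c_i H_{n+1-i}` (weights for a list of length `n`). -/
def Af (P : PLRS) (n s : ℕ) : ℕ := ∑ i ∈ Finset.range s, P.c (i + 1) * P.H (n - i)

/-- `Asum k = c_1 + ⋯ + c_k`. -/
def Asum (P : PLRS) (k : ℕ) : ℕ := ∑ i ∈ Finset.range k, P.c (i + 1)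

@[simp] lemma Af_zero (n : ℕ) : P.Af n 0 = 0 := by simp [Af]

lemma Af_succ (n s : ℕ) : P.Af n (s + 1) = P.Af n s + P.c (s + 1) * P.H (n - s) := by
  simp [Af, Finset.sum_range_succ]

lemma Af_mono (n : ℕ) {s s' : ℕ} (h : s ≤ s') : P.Af n s ≤ P.Af n s' := by
  exact Finset.sum_le_sum_of_subset (Finset.range_subset_range.mpr h)

lemma Asum_succ (k : ℕ) : P.Asum (k + 1) = P.Asum k + P.c (k + 1) := by
  simp [Asum, Finset.sum_range_succ]

@[simp] lemma Asum_zero : P.Asum 0 = 0 := by simp [Asum]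

lemma Asum_mono {s s' : ℕ} (h : s ≤ s') : P.Asum s ≤ P.Asum s' := by
  exact Finset.sum_le_sum_of_subset (Finset.range_subset_range.mpr h)

lemma Asum_eq_Icc (k : ℕ) : P.Asum k = ∑ i ∈ Finset.Icc 1 k, P.c i := by
  rw [← Finset.Ico_add_one_right_eq_Icc, Finset.sum_Ico_eq_sum_range]
  simp [Asum, add_comm]

lemma size_eq_Asum : P.size = P.Asum P.L := by rw [Asum_eq_Icc]; rfl

lemma Af_eq_Icc (n s : ℕ) : P.Af n s = ∑ i ∈ Finset.Icc 1 s, P.c i * P.H (n + 1 - i) := by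
  rw [← Finset.Ico_add_one_right_eq_Icc, Finset.sum_Ico_eq_sum_range]
  simp only [Nat.add_sub_cancel, Af]
  apply Finset.sum_congr rfl
  intro i _
  rw [show 1 + i = i + 1 by omega, show n + 1 - (i + 1) = n - i by omega]

lemma valAux_cpfx (m n : ℕ) : P.valAux (P.cpfx m) n = P.Af n m := by
  induction m with
  | zero => simp
  | succ m ih =>
      rw [cpfx_succ, valAux_append, ih, Af_succ]
      simp

lemma Af_rec {n : ℕ} (h : P.L ≤ n) : P.Af n P.L = P.H (n + 1) := by
  rw [Af_eq_Icc, ← P.H_rec n h]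

lemma Af_init {n : ℕ} (h1 : 1 ≤ n) (h2 : n < P.L) : P.Af n n + 1 = P.H (n + 1) := by
  rw [Af_eq_Icc, ← P.H_init n h1 h2]

lemma Af_le {n s : ℕ} (h1 : 1 ≤ n) (h2 : s ≤ P.L) (h3 : s ≤ n) : P.Af n s ≤ P.H (n + 1) := by
  rcases le_or_gt P.L n with h | h
  · exact le_trans (P.Af_mono n h2) (le_of_eq (P.Af_rec h))
  · calc P.Af n s ≤ P.Af n n := P.Af_mono n h3
      _ ≤ P.Af n n + 1 := Nat.le_succ _
      _ = P.H (n + 1) := P.Af_init h1 h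

lemma H_one_le {m : ℕ} (h : 1 ≤ m) : 1 ≤ P.H m := P.H_pos m h

/-- In the non-degenerate case, `H` is strictly increasing from index 1 on. -/
lemma H_lt_succ (hnd : ¬(P.L = 1 ∧ P.c 1 = 1)) {m : ℕ} (h : 1 ≤ m) :
    P.H m < P.H (m + 1) := by
  rcases lt_or_ge m P.L with hm | hm
  · -- initial condition case
    rw [← P.Af_init h hm]
    have : P.c 1 * P.H m ≤ P.Af m m := by
      have := P.Af_succ m 0
      simp at this
      calc P.c 1 * P.H m = P.Af m 1 := by rw [this]
        _ ≤ P.Af m m := P.Af_mono m h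
    have hc1 := P.c1_pos
    have hHm := P.H_pos m h
    nlinarith
  · -- recurrence case
    rw [← P.Af_rec hm]
    rcases Nat.eq_or_lt_of_le P.L_pos with hL1 | hL2
    · -- L = 1
      have hL : P.L = 1 := hL1.symm
      have hc : 2 ≤ P.c 1 := by
        rcases Nat.lt_or_ge (P.c 1) 2 with h' | h'
        · exfalso; apply hnd; exact ⟨hL, by have := P.c1_pos; omega⟩
        · exact h'
      rw [hL]
      have := P.Af_succ m 0
      simp at this
      rw [this]
      have hHm := P.H_pos m h
      nlinarith
    · -- L ≥ 2
      have hL2' : 2 ≤ P.L := hL2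
      have key : P.c 1 * P.H m + P.c P.L * P.H (m - (P.L - 1)) ≤ P.Af m P.L := by
        have hsub : ({0, P.L - 1} : Finset ℕ) ⊆ Finset.range P.L := by
          intro x hx
          simp at hx
          rcases hx with rfl | rfl <;> simp [Finset.mem_range] <;> omega
        have hne : (0 : ℕ) ≠ P.L - 1 := by omega
        have := Finset.sum_le_sum_of_subset (f := fun i => P.c (i + 1) * P.H (m - i)) hsub
        rw [Finset.sum_pair hne] at this
        simpa [Af, show P.L - 1 + 1 = P.L by omega] using this
      have hHm := P.H_pos m h
      have hH2 : 0 < P.H (m - (P.L - 1)) := P.H_pos _ (by omega)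
      have hc1 := P.c1_pos
      have hcL := P.cL_pos
      nlinarith
  
lemma H_mono (hnd : ¬(P.L = 1 ∧ P.c 1 = 1)) {m k : ℕ} (h1 : 1 ≤ m) (h : m ≤ k) :
    P.H m ≤ P.H k := by
  induction k with
  | zero => omega
  | succ k ih =>
      rcases Nat.eq_or_lt_of_le h with rfl | h'
      · rfl
      · have hk : m ≤ k := by omega
        exact le_trans (ih hk) (le_of_lt (P.H_lt_succ hnd (by omega)))

end PLRS
namespace PLRS

variable (P : PLRS)

/-- set of legal-or-empty lists of length `n` -/
def Sset (P : PLRS) (n : ℕ) : Set (List ℕ) := {l | l.length = n ∧ (l = [] ∨ P.IsLegal l)}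

lemma Af_pred_succ {n s : ℕ} (hs1 : 1 ≤ s) (hsn : s ≤ n) :
    P.Af n s = P.Af n (s - 1) + P.c s * P.H (n - s + 1) := by
  have h := P.Af_succ n (s - 1)
  rw [show s - 1 + 1 = s by omega, show n - (s - 1) = n - s + 1 by omega] at h
  exact h

lemma val_lt_Af {n s a w : ℕ} (hs1 : 1 ≤ s) (hsn : s ≤ n) (ha : a < P.c s)
    (hw : w < P.H (n - s + 1)) :
    P.Af n (s - 1) + a * P.H (n - s + 1) + w < P.Af n s := by
  rw [P.Af_pred_succ hs1 hsn]
  have : (a + 1) * P.H (n - s + 1) ≤ P.c s * P.H (n - s + 1) :=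
    Nat.mul_le_mul_right _ ha
  nlinarith

lemma trap {n s a w s' a' w' : ℕ}
    (hs1 : 1 ≤ s) (hsn : s ≤ n) (ha : a < P.c s) (hw : w < P.H (n - s + 1))
    (hs1' : 1 ≤ s') (hsn' : s' ≤ n) (ha' : a' < P.c s') (hw' : w' < P.H (n - s' + 1))
    (heq : P.Af n (s - 1) + a * P.H (n - s + 1) + w
         = P.Af n (s' - 1) + a' * P.H (n - s' + 1) + w') :
    s = s' ∧ a = a' ∧ w = w' := by
  have hss : s = s' := by
    rcases lt_trichotomy s s' with h | h | h
    · exfalso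
      have h1 : P.Af n (s - 1) + a * P.H (n - s + 1) + w < P.Af n s :=
        P.val_lt_Af hs1 hsn ha hw
      have h2 : P.Af n s ≤ P.Af n (s' - 1) := P.Af_mono n (by omega)
      omega
    · exact h
    · exfalso
      have h1 : P.Af n (s' - 1) + a' * P.H (n - s' + 1) + w' < P.Af n s' :=
        P.val_lt_Af hs1' hsn' ha' hw'
      have h2 : P.Af n s' ≤ P.Af n (s - 1) := P.Af_mono n (by omega)
      omega
  subst hss
  have heq2 : a * P.H (n - s + 1) + w = a' * P.H (n - s + 1) + w' := by omega
  have haa : a = a' := by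
    rcases lt_trichotomy a a' with h | h | h
    · exfalso
      have : (a + 1) * P.H (n - s + 1) ≤ a' * P.H (n - s + 1) :=
        Nat.mul_le_mul_right _ h
      nlinarith
    · exact h
    · exfalso
      have : (a' + 1) * P.H (n - s + 1) ≤ a * P.H (n - s + 1) :=
        Nat.mul_le_mul_right _ h
      nlinarith
  subst haa
  exact ⟨rfl, rfl, by omega⟩

lemma val_shape {n : ℕ} (s a : ℕ) (rest : List ℕ) (hs1 : 1 ≤ s) (hsn : s ≤ n) :
    P.valAux (P.cpfx (s - 1) ++ a :: rest) n
      = P.Af n (s - 1) + a * P.H (n - s + 1) + P.valAux rest (n - s) := by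
  rw [valAux_append, valAux_cpfx, valAux_cons]
  rw [cpfx_length, show n - (s - 1) = n - s + 1 by omega,
    show n - s + 1 - 1 = n - s by omega, add_assoc]

lemma shape {n : ℕ} (hn : 1 ≤ n) {l : List ℕ} (hl : l ∈ P.Sset n) :
    (n < P.L ∧ l = P.cpfx n) ∨
      ∃ s a rest, 1 ≤ s ∧ s ≤ P.L ∧ s ≤ n ∧ a < P.c s ∧ rest ∈ P.Sset (n - s) ∧
        l = P.cpfx (s - 1) ++ a :: rest := by
  obtain ⟨hlen, hleg⟩ := hl
  rcases hleg with rfl | hleg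
  · simp at hlen; omega
  · cases hleg with
    | cond1 m h1 h2 =>
        left
        have hm : m = n := by
          have := P.cpfx_length m
          rw [show P.cpfx m = (List.range m).map fun i => P.c (i+1) from rfl] at this
          omega
        subst hm
        exact ⟨h2, rfl⟩
    | cond2 s hs1 hs2 a ha rest hrest =>
        right
        refine ⟨s, a, rest, hs1, hs2, ?_, ha, ?_, rfl⟩
        · have : (s - 1) + (rest.length + 1) = n := by
            simpa [cpfx] using hlen
          omega
        · constructor
          · have : (s - 1) + (rest.length + 1) = n := by simpa [cpfx] using hlen
            omega
          · exact Or.inr hrest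
    | cond2_last s hs1 hs2 a ha =>
        right
        refine ⟨s, a, [], hs1, hs2, ?_, ha, ?_, rfl⟩
        · have : (s - 1) + 1 = n := by simpa [cpfx] using hlen
          omega
        · constructor
          · have : (s - 1) + 1 = n := by simpa [cpfx] using hlen
            simp; omega
          · exact Or.inl rfl

lemma key : ∀ n : ℕ, Set.BijOn (fun l => P.valAux l n) (P.Sset n) (Set.Iio (P.H (n + 1))) := by
  intro n
  induction n using Nat.strong_induction_on with
  | _ n ih =>
  rcases Nat.eq_zero_or_pos n with rfl | hn
  · constructor
    · intro l hl
      have : l = [] := List.length_eq_zero_iff.mp hl.1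
      subst this
      simp [Set.mem_Iio, P.H_one]
    constructor
    · intro l hl l' hl' _
      have h1 : l = [] := List.length_eq_zero_iff.mp hl.1
      have h2 : l' = [] := List.length_eq_zero_iff.mp hl'.1
      rw [h1, h2]
    · intro v hv
      simp only [Set.mem_Iio, P.H_one, Nat.lt_one_iff] at hv
      exact ⟨[], ⟨rfl, Or.inl rfl⟩, by simp [hv]⟩
  · have hAfn : n < P.L → P.Af n n + 1 = P.H (n + 1) := fun h => P.Af_init hn h
    constructor
    · -- MapsTo
      intro l hl
      rcases P.shape hn hl with ⟨hnL, rfl⟩ | ⟨s, a, rest, hs1, hsL, hsn, ha, hrest, rfl⟩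
      · simp only [Set.mem_Iio]
        rw [valAux_cpfx]
        omega
      · simp only [Set.mem_Iio]
        rw [P.val_shape s a rest hs1 hsn]
        have hw : P.valAux rest (n - s) < P.H (n - s + 1) := by
          have := (ih (n - s) (by omega)).mapsTo hrest
          simpa using this
        calc P.Af n (s-1) + a * P.H (n - s + 1) + P.valAux rest (n - s)
            < P.Af n s := P.val_lt_Af hs1 hsn ha hw
          _ ≤ P.H (n + 1) := P.Af_le hn hsL hsn
    constructor
    · -- InjOn
      intro l hl l' hl' heq
      simp only at heq
      rcases P.shape hn hl with ⟨hnL, rfl⟩ | ⟨s, a, rest, hs1, hsL, hsn, ha, hrest, rfl⟩ <;>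
        rcases P.shape hn hl' with ⟨hnL', rfl⟩ | ⟨s', a', rest', hs1', hsL', hsn', ha', hrest', rfl⟩
      · rfl
      · exfalso
        rw [valAux_cpfx, P.val_shape s' a' rest' hs1' hsn'] at heq
        have hw' : P.valAux rest' (n - s') < P.H (n - s' + 1) := by
          have := (ih (n - s') (by omega)).mapsTo hrest'
          simpa using this
        have h1 : P.Af n (s'-1) + a' * P.H (n - s' + 1) + P.valAux rest' (n - s') < P.Af n s' :=
          P.val_lt_Af hs1' hsn' ha' hw'
        have h2 : P.Af n s' ≤ P.Af n n := P.Af_mono n hsn'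
        omega
      · exfalso
        rw [valAux_cpfx, P.val_shape s a rest hs1 hsn] at heq
        have hw : P.valAux rest (n - s) < P.H (n - s + 1) := by
          have := (ih (n - s) (by omega)).mapsTo hrest
          simpa using this
        have h1 : P.Af n (s-1) + a * P.H (n - s + 1) + P.valAux rest (n - s) < P.Af n s :=
          P.val_lt_Af hs1 hsn ha hw
        have h2 : P.Af n s ≤ P.Af n n := P.Af_mono n hsn
        omega
      · rw [P.val_shape s a rest hs1 hsn, P.val_shape s' a' rest' hs1' hsn'] at heq
        have hw : P.valAux rest (n - s) < P.H (n - s + 1) := by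
          have := (ih (n - s) (by omega)).mapsTo hrest
          simpa using this
        have hw' : P.valAux rest' (n - s') < P.H (n - s' + 1) := by
          have := (ih (n - s') (by omega)).mapsTo hrest'
          simpa using this
        obtain ⟨hss, haa, hww⟩ := P.trap hs1 hsn ha hw hs1' hsn' ha' hw' heq
        subst hss; subst haa
        have : rest = rest' := (ih (n - s) (by omega)).injOn hrest hrest' hww
        rw [this]
    · -- SurjOn
      intro v hv
      simp only [Set.mem_Iio] at hv
      by_cases hA : n < P.L ∧ v = P.H (n + 1) - 1
      · refine ⟨P.cpfx n, ⟨by simp, Or.inr (IsLegal.cond1 n hn hA.1)⟩, ?_⟩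
        simp only [valAux_cpfx]
        have := hAfn hA.1
        omega
      · have hex : v < P.Af n (min P.L n) := by
          rcases le_or_gt P.L n with h | h
          · rw [min_eq_left h, P.Af_rec h]; exact hv
          · rw [min_eq_right (le_of_lt h)]
            have h1 := hAfn h
            have h2 : v ≠ P.H (n + 1) - 1 := fun hc => hA ⟨h, hc⟩
            omega
        have hfind : ∃ s, v < P.Af n s := ⟨min P.L n, hex⟩
        set s := Nat.find hfind with hs_def
        have hspec : v < P.Af n s := Nat.find_spec hfind
        have hsmin : P.Af n (min P.L n) ≤ P.Af n ((min P.L n)) := le_refl _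
        have hsle : s ≤ min P.L n := Nat.find_min' hfind hex
        have hs1 : 1 ≤ s := by
          rcases Nat.eq_zero_or_pos s with h0 | h; · rw [h0] at hspec; simp at hspec
          exact h
        have hlow : P.Af n (s - 1) ≤ v := by
          have := Nat.find_min hfind (show s - 1 < s by omega)
          omega
        have hsn : s ≤ n := le_trans hsle (min_le_right _ _)
        have hsL : s ≤ P.L := le_trans hsle (min_le_left _ _)
        have Hpos : 0 < P.H (n - s + 1) := P.H_pos _ (by omega)
        set d := v - P.Af n (s - 1) with hd_def
        have hd : d < P.c s * P.H (n - s + 1) := by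
          have := P.Af_pred_succ hs1 hsn
          omega
        set a := d / P.H (n - s + 1) with ha_def
        set w := d % P.H (n - s + 1) with hw_def
        have ha : a < P.c s := by
          rw [ha_def]
          exact (Nat.div_lt_iff_lt_mul Hpos).mpr hd
        have hw : w < P.H (n - s + 1) := Nat.mod_lt _ Hpos
        obtain ⟨rest, hrest, hrval⟩ := (ih (n - s) (by omega)).surjOn (Set.mem_Iio.mpr hw)
        refine ⟨P.cpfx (s - 1) ++ a :: rest, ?_, ?_⟩
        · constructor
          · simp only [List.length_append, cpfx_length, List.length_cons]
            have : rest.length = n - s := hrest.1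
            omega
          · right
            rcases hrest.2 with rfl | hleg
            · exact IsLegal.cond2_last s hs1 hsL a ha
            · exact IsLegal.cond2 s hs1 hsL a ha rest hleg
        · simp only
          rw [P.val_shape s a rest hs1 hsn]
          simp only at hrval
          rw [hrval]
          have hdm : a * P.H (n - s + 1) + w = d := by
            rw [mul_comm]; exact Nat.div_add_mod d _
          omega

end PLRS
namespace PLRS

variable (P : PLRS)

lemma cpfx_def (m : ℕ) : ((List.range m).map fun i => P.c (i + 1)) = P.cpfx m := rfl

lemma Sset_image (n : ℕ) : (fun l => P.valAux l n) '' P.Sset n = Set.Iio (P.H (n + 1)) :=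
  (P.key n).image_eq

lemma Sset_finite (n : ℕ) : (P.Sset n).Finite :=
  Set.Finite.of_finite_image (by rw [P.Sset_image n]; exact Set.finite_Iio _) (P.key n).injOn

lemma ncard_Sset (n : ℕ) : (P.Sset n).ncard = P.H (n + 1) := by
  have h1 := Set.ncard_image_of_injOn (P.key n).injOn
  rw [P.Sset_image n] at h1
  rw [← h1, show Set.Iio (P.H (n+1)) = ↑(Finset.Iio (P.H (n+1))) by simp,
    Set.ncard_coe_finset]
  simp

lemma legal_cons_zero {xs : List ℕ} (h : P.IsLegal (0 :: xs)) : xs = [] ∨ P.IsLegal xs := by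
  generalize hE : (0 : ℕ) :: xs = l at h
  cases h with
  | cond1 m h1 h2 =>
      exfalso
      rw [cpfx_def, P.cpfx_head m h1] at hE
      have h0 : P.c 1 = 0 := ((List.cons.injEq _ _ _ _).mp hE.symm).1
      have := P.c1_pos
      omega
  | cond2 s hs1 hs2 a ha rest hrest =>
      rw [cpfx_def] at hE
      rcases Nat.lt_or_ge s 2 with h1 | h2
      · have hs : s = 1 := by omega
        subst hs
        simp only [Nat.sub_self, cpfx_zero, List.nil_append] at hE
        obtain ⟨-, h3⟩ := (List.cons.injEq _ _ _ _).mp hE.symm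
        right; rw [← h3]; exact hrest
      · exfalso
        rw [P.cpfx_head (s - 1) (by omega)] at hE
        simp only [List.cons_append] at hE
        have h0 : P.c 1 = 0 := ((List.cons.injEq _ _ _ _).mp hE.symm).1
        have := P.c1_pos
        omega
  | cond2_last s hs1 hs2 a ha =>
      rw [cpfx_def] at hE
      rcases Nat.lt_or_ge s 2 with h1 | h2
      · have hs : s = 1 := by omega
        subst hs
        simp only [Nat.sub_self, cpfx_zero, List.nil_append] at hE
        obtain ⟨-, h3⟩ := (List.cons.injEq _ _ _ _).mp hE.symm
        left; exact h3.symm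
      · exfalso
        rw [P.cpfx_head (s - 1) (by omega)] at hE
        simp only [List.cons_append] at hE
        have h0 : P.c 1 = 0 := ((List.cons.injEq _ _ _ _).mp hE.symm).1
        have := P.c1_pos
        omega

lemma legal_cons_zero' {xs : List ℕ} (h : xs = [] ∨ P.IsLegal xs) : P.IsLegal (0 :: xs) := by
  rcases h with rfl | h
  · have := IsLegal.cond2_last (P := P) 1 le_rfl P.L_pos 0 P.c1_pos
    simpa using this
  · have := IsLegal.cond2 (P := P) 1 le_rfl P.L_pos 0 P.c1_pos xs h
    simpa using this

lemma zero_set_eq (n : ℕ) (hn : 1 ≤ n) :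
    {l | l ∈ P.Sset n ∧ l.headI = 0} = (fun r => (0 : ℕ) :: r) '' P.Sset (n - 1) := by
  ext l
  constructor
  · rintro ⟨⟨hlen, hleg⟩, hhead⟩
    have hne : l ≠ [] := by
      intro h; rw [h] at hlen; simp at hlen; omega
    obtain ⟨x, xs, rfl⟩ := List.exists_cons_of_ne_nil hne
    simp only [List.headI_cons] at hhead
    subst hhead
    refine ⟨xs, ⟨?_, ?_⟩, rfl⟩
    · simp at hlen; omega
    · rcases hleg with h | h
      · simp at h
      · exact P.legal_cons_zero h
  · rintro ⟨r, ⟨hlen, hleg⟩, rfl⟩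
    exact ⟨⟨by simp; omega, Or.inr (P.legal_cons_zero' hleg)⟩, rfl⟩

lemma Dset_eq (n : ℕ) (hn : 1 ≤ n) :
    {l | P.LegalDecomp l ∧ l.length = n}
      = P.Sset n \ {l | l ∈ P.Sset n ∧ l.headI = 0} := by
  ext l
  simp only [Set.mem_setOf_eq, Set.mem_diff, LegalDecomp, Sset]
  constructor
  · rintro ⟨⟨hleg, hhead⟩, hlen⟩
    exact ⟨⟨hlen, Or.inr hleg⟩, fun h => by omega⟩
  · rintro ⟨⟨hlen, hleg⟩, hne⟩
    rcases hleg with rfl | hleg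
    · simp at hlen; omega
    · refine ⟨⟨hleg, ?_⟩, hlen⟩
      by_contra h
      exact hne ⟨⟨hlen, Or.inr hleg⟩, by omega⟩

lemma ncard_Dset (n : ℕ) (hn : 1 ≤ n) :
    {l | P.LegalDecomp l ∧ l.length = n}.ncard = P.H (n + 1) - P.H n := by
  rw [P.Dset_eq n hn, Set.ncard_diff (show {l | l ∈ P.Sset n ∧ l.headI = 0} ⊆ P.Sset n from fun l hl => hl.1) ((P.Sset_finite n).subset (fun l hl => hl.1))]
  rw [P.ncard_Sset n, P.zero_set_eq n hn]
  rw [Set.ncard_image_of_injective _ (fun a b h => by simpa using h)]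
  rw [P.ncard_Sset (n - 1), show n - 1 + 1 = n by omega]

lemma Dset_finite (n : ℕ) (hn : 1 ≤ n) :
    {l : List ℕ | P.LegalDecomp l ∧ l.length = n}.Finite := by
  rw [P.Dset_eq n hn]
  exact (P.Sset_finite n).diff

lemma value_lower {l : List ℕ} (hleg : P.LegalDecomp l) :
    P.H l.length ≤ P.value l := by
  obtain ⟨hl, hh⟩ := hleg
  have hne : l ≠ [] := by intro h; rw [h] at hh; simp at hh
  obtain ⟨x, xs, rfl⟩ := List.exists_cons_of_ne_nil hne
  rw [value_eq_valAux, valAux_cons]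
  simp only [List.headI_cons] at hh
  calc P.H (x :: xs).length = 1 * P.H (x :: xs).length := (one_mul _).symm
    _ ≤ x * P.H (x :: xs).length := Nat.mul_le_mul_right _ hh
    _ ≤ _ := Nat.le_add_right _ _

lemma value_upper {l : List ℕ} (hleg : P.IsLegal l) :
    P.value l < P.H (l.length + 1) := by
  rw [value_eq_valAux]
  have := (P.key l.length).mapsTo (show l ∈ P.Sset l.length from ⟨rfl, Or.inr hleg⟩)
  simpa using this

lemma Omega_eq (hnd : ¬(P.L = 1 ∧ P.c 1 = 1)) (n : ℕ) (hn : 1 ≤ n) :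
    P.Omega n = {l | P.LegalDecomp l ∧ l.length = n} := by
  ext l
  simp only [Omega, Set.mem_setOf_eq]
  constructor
  · rintro ⟨hleg, hlow, hupp⟩
    refine ⟨hleg, ?_⟩
    have h1 := P.value_lower hleg
    have h2 := P.value_upper hleg.1
    have hne : l ≠ [] := by
      intro h; rw [h] at hleg; exact absurd hleg.2 (by simp)
    have hm1 : 1 ≤ l.length := List.length_pos_iff.mpr hne
    by_contra hne'
    rcases Nat.lt_or_ge l.length n with h | h
    · have : P.H (l.length + 1) ≤ P.H n := P.H_mono hnd (by omega) (by omega)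
      omega
    · have hlt : n < l.length := by omega
      have : P.H (n + 1) ≤ P.H l.length := P.H_mono hnd (by omega) (by omega)
      omega
  · rintro ⟨hleg, rfl⟩
    exact ⟨hleg, P.value_lower hleg, P.value_upper hleg.1⟩

lemma ncard_Omega (hnd : ¬(P.L = 1 ∧ P.c 1 = 1)) (n : ℕ) (hn : 1 ≤ n) :
    (P.Omega n).ncard = P.H (n + 1) - P.H n := by
  rw [P.Omega_eq hnd n hn]; exact P.ncard_Dset n hn

end PLRS
namespace PLRS
variable (P : PLRS)
lemma blocks_nil : P.blocks [] = [] := by rw [blocks]; simp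
lemma blocks_ne {l : List ℕ} (h : l ≠ []) :
    P.blocks l = match P.firstMismatch l with
      | none => [l]
      | some i => l.take (i + 1) :: P.blocks (l.drop (i + 1)) := by
  rw [blocks]
  simp [h]
end PLRS
lemma find?_range_eq_some {p : ℕ → Bool} {n i : ℕ} (hi : i < n) (hpi : p i = true)
    (hj : ∀ j < i, p j = false) : (List.range n).find? p = some i := by
  revert hi
  induction n with
  | zero => intro hi; omega
  | succ n ihn =>
      intro hi
      rw [List.range_succ, List.find?_append]
      rcases Nat.lt_or_ge i n with h | h
      · rw [ihn h]; rfl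
      · have hin : i = n := by omega
        subst hin
        have hnone : (List.range i).find? p = none :=
          List.find?_eq_none.mpr (fun x hx => by
            simp only [List.mem_range] at hx
            simp [hj x hx])
        rw [hnone]
        simp [List.find?, hpi]

lemma getLast?_cons_ne {α : Type*} {a : α} {l : List α} (h : l ≠ []) :
    (a :: l).getLast? = l.getLast? := by
  cases l with
  | nil => exact absurd rfl h
  | cons x xs => simp

namespace PLRS

variable (P : PLRS)

lemma type2_shape {b : List ℕ} (hb : P.IsType2Block b) :
    ∃ s a, 1 ≤ s ∧ s ≤ P.L ∧ a < P.c s ∧ b = P.cpfx (s - 1) ++ [a] ∧ b.length = s := by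
  obtain ⟨s, hs1, hsL, a, ha, hbe⟩ := hb
  rw [cpfx_def] at hbe
  exact ⟨s, a, hs1, hsL, ha, hbe, by rw [hbe]; simp; omega⟩

lemma type2_ne_nil {b : List ℕ} (hb : P.IsType2Block b) : b ≠ [] := by
  obtain ⟨s, a, _, _, _, rfl, _⟩ := P.type2_shape hb
  simp

lemma type1_shape {b : List ℕ} (hb : P.IsType1Block b) :
    ∃ m, 1 ≤ m ∧ m < P.L ∧ b = P.cpfx m ∧ b.length = m := by
  obtain ⟨m, h1, h2, hbe⟩ := hb
  rw [cpfx_def] at hbe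
  exact ⟨m, h1, h2, hbe, by rw [hbe]; simp⟩

lemma type1_ne_nil {b : List ℕ} (hb : P.IsType1Block b) : b ≠ [] := by
  obtain ⟨m, h1, _, rfl, _⟩ := P.type1_shape hb
  intro h
  have := congrArg List.length h
  simp at this
  omega

lemma firstMismatch_type2 {b : List ℕ} (hb : P.IsType2Block b) (r : List ℕ) :
    P.firstMismatch (b ++ r) = some (b.length - 1) := by
  obtain ⟨s, a, hs1, hsL, ha, rfl, hlen⟩ := P.type2_shape hb
  rw [hlen]
  unfold firstMismatch
  apply find?_range_eq_some
  · simp only [List.length_append, cpfx_length, List.length_append, List.length_cons]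
    simp; omega
  · have hget : ((P.cpfx (s - 1) ++ [a]) ++ r).getD (s - 1) 0 = a := by
      rw [List.append_assoc]
      rw [List.getD_append_right _ _ _ _ (by simp)]
      simp
    rw [hget, show s - 1 + 1 = s by omega]
    simp only [bne_iff_ne, ne_eq]
    omega
  · intro j hj
    have hget : ((P.cpfx (s - 1) ++ [a]) ++ r).getD j 0 = P.c (j + 1) := by
      rw [List.append_assoc, List.getD_append _ _ _ _ (by simp; omega)]
      exact P.cpfx_getD hj
    rw [hget]
    simp

lemma firstMismatch_type1 {b : List ℕ} (hb : P.IsType1Block b) :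
    P.firstMismatch b = none := by
  obtain ⟨m, h1, h2, rfl, hlen⟩ := P.type1_shape hb
  unfold firstMismatch
  apply List.find?_eq_none.mpr
  intro x hx
  simp only [cpfx_length, List.mem_range] at hx
  rw [P.cpfx_getD hx]
  simp

lemma blocks_type2_cons {b : List ℕ} (hb : P.IsType2Block b) (r : List ℕ) :
    P.blocks (b ++ r) = b :: P.blocks r := by
  have hne : b ++ r ≠ [] := by
    simp [P.type2_ne_nil hb]
  rw [P.blocks_ne hne, P.firstMismatch_type2 hb r]
  dsimp only
  obtain ⟨s, a, hs1, hsL, ha, hbe, hlen⟩ := P.type2_shape hb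
  have h1 : b.length - 1 + 1 = b.length := by omega
  rw [h1, List.take_left' rfl, List.drop_left' rfl]

lemma blocks_type1 {b : List ℕ} (hb : P.IsType1Block b) :
    P.blocks b = [b] := by
  rw [P.blocks_ne (P.type1_ne_nil hb), P.firstMismatch_type1 hb]

/-- a good block list: all blocks type 2 except possibly the last -/
def Good (P : PLRS) (bs : List (List ℕ)) : Prop :=
  (∀ b ∈ bs.dropLast, P.IsType2Block b) ∧
    (∀ b ∈ bs.getLast?, (P.IsType2Block b ∨ P.IsType1Block b))

lemma Good_cons {b : List ℕ} {bs : List (List ℕ)} (hne : bs ≠ [])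
    (hb : P.IsType2Block b) (hbs : P.Good bs) : P.Good (b :: bs) := by
  obtain ⟨h1, h2⟩ := hbs
  constructor
  · rw [List.dropLast_cons_of_ne_nil hne]
    intro x hx
    rcases List.mem_cons.mp hx with rfl | hx
    · exact hb
    · exact h1 x hx
  · rw [getLast?_cons_ne hne]
    exact h2

lemma Good_tail {b : List ℕ} {bs : List (List ℕ)} (hne : bs ≠ [])
    (h : P.Good (b :: bs)) : P.IsType2Block b ∧ P.Good bs := by
  obtain ⟨h1, h2⟩ := h
  rw [List.dropLast_cons_of_ne_nil hne] at h1
  rw [getLast?_cons_ne hne] at h2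
  exact ⟨h1 b List.mem_cons_self, ⟨fun x hx => h1 x (List.mem_cons_of_mem _ hx), h2⟩⟩

lemma Good_single {b : List ℕ} (h : P.Good [b]) : P.IsType2Block b ∨ P.IsType1Block b :=
  h.2 b rfl

lemma blocks_flatten {bs : List (List ℕ)} (h : P.Good bs) :
    P.blocks bs.flatten = bs := by
  induction bs with
  | nil => simp [P.blocks_nil]
  | cons b bs ih =>
      rcases eq_or_ne bs [] with rfl | hne
      · rcases P.Good_single h with hb | hb
        · have : P.blocks (b ++ []) = b :: P.blocks [] := P.blocks_type2_cons hb []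
          simpa [P.blocks_nil] using this
        · simpa using P.blocks_type1 hb
      · obtain ⟨hb, hbs⟩ := P.Good_tail hne h
        rw [List.flatten_cons, P.blocks_type2_cons hb _, ih hbs]

lemma legal_flatten {bs : List (List ℕ)} (h : P.Good bs) (hne : bs ≠ []) :
    P.IsLegal bs.flatten := by
  induction bs with
  | nil => exact absurd rfl hne
  | cons b bs ih =>
      rcases eq_or_ne bs [] with rfl | hne'
      · rcases P.Good_single h with hb | hb
        · obtain ⟨s, a, hs1, hsL, ha, rfl, _⟩ := P.type2_shape hb
          have := IsLegal.cond2_last (P := P) s hs1 hsL a ha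
          rw [cpfx_def] at this
          simpa using this
        · obtain ⟨m, h1, h2, rfl, _⟩ := P.type1_shape hb
          have := IsLegal.cond1 (P := P) m h1 h2
          rw [cpfx_def] at this
          simpa using this
      · obtain ⟨hb, hbs⟩ := P.Good_tail hne' h
        obtain ⟨s, a, hs1, hsL, ha, rfl, _⟩ := P.type2_shape hb
        have hrest := ih hbs hne'
        have := IsLegal.cond2 (P := P) s hs1 hsL a ha bs.flatten hrest
        rw [cpfx_def] at this
        rw [List.flatten_cons, List.append_assoc]
        simpa using this

lemma legal_is_flatten {l : List ℕ} (h : P.IsLegal l) :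
    ∃ bs, P.Good bs ∧ bs ≠ [] ∧ bs.flatten = l := by
  induction h with
  | cond1 m h1 h2 =>
      refine ⟨[P.cpfx m], ⟨by simp, ?_⟩, by simp, by simp [cpfx_def]⟩
      intro b hb
      simp only [List.getLast?_singleton, Option.mem_some_iff] at hb
      subst hb
      exact Or.inr ⟨m, h1, h2, rfl⟩
  | cond2 s hs1 hs2 a ha rest hrest ih =>
      obtain ⟨bs, hgood, hne, hfl⟩ := ih
      refine ⟨(P.cpfx (s - 1) ++ [a]) :: bs, ?_, by simp, ?_⟩
      · exact P.Good_cons hne ⟨s, hs1, hs2, a, ha, rfl⟩ hgood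
      · rw [List.flatten_cons, hfl, List.append_assoc, cpfx_def]
        simp
  | cond2_last s hs1 hs2 a ha =>
      refine ⟨[P.cpfx (s - 1) ++ [a]], ⟨by simp, ?_⟩, by simp, by simp [cpfx_def]⟩
      intro b hb
      simp only [List.getLast?_singleton, Option.mem_some_iff] at hb
      subst hb
      exact Or.inl ⟨s, hs1, hs2, a, ha, rfl⟩

lemma good_block_mem {bs : List (List ℕ)} (h : P.Good bs) {b : List ℕ} (hb : b ∈ bs) :
    1 ≤ b.length ∧ b.length ≤ P.L := by
  rcases eq_or_ne bs [] with rfl | hne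
  · simp at hb
  · have : bs = bs.dropLast ++ [bs.getLast hne] := (List.dropLast_append_getLast hne).symm
    rw [this] at hb
    rcases List.mem_append.mp hb with hb' | hb'
    · obtain ⟨s, a, hs1, hsL, _, _, hlen⟩ := P.type2_shape (h.1 b hb')
      omega
    · simp only [List.mem_singleton] at hb'
      subst hb'
      have hlast : bs.getLast hne ∈ bs.getLast? := by
        rw [List.getLast?_eq_getLast hne]; rfl
      rcases h.2 _ hlast with h2 | h1
      · obtain ⟨s, a, hs1, hsL, _, _, hlen⟩ := P.type2_shape h2
        omega
      · obtain ⟨m, h1', h2', _, hlen⟩ := P.type1_shape h1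
        omega

lemma flatten_length_le {bs : List (List ℕ)} (h : P.Good bs) :
    bs.flatten.length ≤ P.L * bs.length := by
  rw [List.length_flatten]
  calc (bs.map List.length).sum ≤ (bs.map List.length).length * P.L := by
        apply List.sum_le_card_nsmul
        intro x hx
        obtain ⟨b, hb, rfl⟩ := List.mem_map.mp hx
        exact (P.good_block_mem h hb).2
    _ = P.L * bs.length := by rw [List.length_map]; ring

end PLRS
namespace PLRS

variable (P : PLRS)

lemma ell_set_eq (t : ℕ) : {s : ℕ | t < ∑ i ∈ Finset.Icc 1 s, P.c i} = {s : ℕ | t < P.Asum s} := by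
  ext s; rw [Set.mem_setOf_eq, Set.mem_setOf_eq, Asum_eq_Icc]

lemma ell_eq_sInf (t : ℕ) : P.ell t = sInf {s : ℕ | t < P.Asum s} := by
  rw [ell, ell_set_eq]

lemma ell_spec {t : ℕ} (ht : t < P.size) :
    1 ≤ P.ell t ∧ P.ell t ≤ P.L ∧ P.Asum (P.ell t - 1) ≤ t ∧ t < P.Asum (P.ell t) := by
  rw [P.ell_eq_sInf t]
  have hmem : P.L ∈ {s : ℕ | t < P.Asum s} := by
    rw [Set.mem_setOf_eq, ← P.size_eq_Asum]; exact ht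
  have hne : {s : ℕ | t < P.Asum s}.Nonempty := ⟨P.L, hmem⟩
  have hsle : sInf {s : ℕ | t < P.Asum s} ≤ P.L := Nat.sInf_le hmem
  have hin : t < P.Asum (sInf {s : ℕ | t < P.Asum s}) := Nat.sInf_mem hne
  have h1 : 1 ≤ sInf {s : ℕ | t < P.Asum s} := by
    by_contra h
    have h0 : sInf {s : ℕ | t < P.Asum s} = 0 := by omega
    rw [h0] at hin; simp at hin
  have hlow : P.Asum (sInf {s : ℕ | t < P.Asum s} - 1) ≤ t := by
    have := Nat.notMem_of_lt_sInf (s := {s : ℕ | t < P.Asum s})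
      (show sInf {s : ℕ | t < P.Asum s} - 1 < sInf {s : ℕ | t < P.Asum s} by omega)
    rw [Set.mem_setOf_eq] at this
    omega
  exact ⟨h1, hsle, hlow, hin⟩

lemma ell_val {s a : ℕ} (hs1 : 1 ≤ s) (ha : a < P.c s) :
    P.ell (P.Asum (s - 1) + a) = s := by
  rw [P.ell_eq_sInf]
  have hAs : P.Asum s = P.Asum (s - 1) + P.c s := by
    have := P.Asum_succ (s - 1)
    rw [show s - 1 + 1 = s by omega] at this
    exact this
  have hmem : s ∈ {k : ℕ | P.Asum (s - 1) + a < P.Asum k} := by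
    rw [Set.mem_setOf_eq, hAs]; omega
  refine le_antisymm (Nat.sInf_le hmem) ?_
  by_contra h
  push_neg at h
  have hin := Nat.sInf_mem (⟨s, hmem⟩ : {k : ℕ | P.Asum (s - 1) + a < P.Asum k}.Nonempty)
  rw [Set.mem_setOf_eq] at hin
  have : P.Asum (sInf {k : ℕ | P.Asum (s - 1) + a < P.Asum k}) ≤ P.Asum (s - 1) :=
    P.Asum_mono (by omega)
  omega

lemma sum_cpfx (m : ℕ) : (P.cpfx m).sum = P.Asum m := by
  induction m with
  | zero => simp
  | succ m ih => rw [cpfx_succ, Asum_succ, List.sum_append, ih]; simp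

lemma type2Block_eq (t : ℕ) :
    P.type2Block t = P.cpfx (P.ell t - 1) ++ [t - P.Asum (P.ell t - 1)] := by
  rw [type2Block, cpfx_def, Asum_eq_Icc]

lemma type2_sum_unique {b : List ℕ} (hb : P.IsType2Block b) {t : ℕ} (hsum : b.sum = t) :
    b = P.type2Block t ∧ b.length = P.ell t := by
  obtain ⟨s, a, hs1, hsL, ha, rfl, hlen⟩ := P.type2_shape hb
  have hsum' : P.Asum (s - 1) + a = t := by
    rw [← hsum, List.sum_append, sum_cpfx]; simp
  have hell : P.ell t = s := by rw [← hsum']; exact P.ell_val hs1 ha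
  constructor
  · rw [P.type2Block_eq, hell]
    congr 1
    simp
    omega
  · rw [hell, hlen]

lemma type2Block_is {t : ℕ} (ht : t < P.size) :
    P.IsType2Block (P.type2Block t) ∧ (P.type2Block t).sum = t ∧
      (P.type2Block t).length = P.ell t := by
  obtain ⟨h1, h2, h3, h4⟩ := P.ell_spec ht
  have hb : P.IsType2Block (P.type2Block t) := by
    refine ⟨P.ell t, h1, h2, t - P.Asum (P.ell t - 1), ?_, ?_⟩
    · have hAs : P.Asum (P.ell t) = P.Asum (P.ell t - 1) + P.c (P.ell t) := by
        have := P.Asum_succ (P.ell t - 1)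
        rw [show P.ell t - 1 + 1 = P.ell t by omega] at this
        exact this
      omega
    · rw [P.type2Block_eq, cpfx_def]
  have hsum : (P.type2Block t).sum = t := by
    rw [P.type2Block_eq, List.sum_append, sum_cpfx]
    simp
    omega
  exact ⟨hb, hsum, (P.type2_sum_unique hb hsum).2⟩

end PLRS
lemma two_split {α : Type*} {bs : List α} (h : 2 ≤ bs.length) :
    ∃ u p q, bs = u ++ [p, q] := by
  have hne : bs ≠ [] := by intro hc; rw [hc] at h; simp at h
  obtain ⟨q, hq⟩ : ∃ q, bs = bs.dropLast ++ [q] :=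
    ⟨bs.getLast hne, (List.dropLast_append_getLast hne).symm⟩
  have hne2 : bs.dropLast ≠ [] := by
    intro hc
    rw [hc] at hq
    rw [hq] at h; simp at h
  obtain ⟨p, hp⟩ : ∃ p, bs.dropLast = bs.dropLast.dropLast ++ [p] :=
    ⟨bs.dropLast.getLast hne2, (List.dropLast_append_getLast hne2).symm⟩
  refine ⟨bs.dropLast.dropLast, p, q, ?_⟩
  conv_lhs => rw [hq, hp]
  simp

lemma one_split {α : Type*} {bs : List α} (h : bs ≠ []) :
    ∃ u q, bs = u ++ [q] :=
  ⟨bs.dropLast, bs.getLast h, (List.dropLast_append_getLast h).symm⟩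

namespace PLRS

variable (P : PLRS)

lemma Good_snoc {u : List (List ℕ)} {q : List ℕ} :
    P.Good (u ++ [q]) ↔ (∀ b ∈ u, P.IsType2Block b) ∧ (P.IsType2Block q ∨ P.IsType1Block q) := by
  unfold Good
  rw [List.dropLast_concat, List.getLast?_concat]
  simp [Option.mem_def]

lemma blocks_of_legal {l : List ℕ} (h : P.IsLegal l) :
    P.Good (P.blocks l) ∧ (P.blocks l).flatten = l ∧ P.blocks l ≠ [] := by
  obtain ⟨bs, hgood, hne, hfl⟩ := P.legal_is_flatten h
  rw [← hfl, P.blocks_flatten hgood]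
  exact ⟨hgood, rfl, hne⟩

lemma headI_flatten_cons {b : List ℕ} {bs : List (List ℕ)} (hb : b ≠ []) :
    (List.flatten (b :: bs)).headI = b.headI := by
  obtain ⟨x, xs, rfl⟩ := List.exists_cons_of_ne_nil hb
  simp

lemma stl_of_split {l : List ℕ} {u : List (List ℕ)} {p q : List ℕ}
    (h : P.blocks l = u ++ [p, q]) : P.stlBlock l = p := by
  unfold stlBlock
  rw [h]
  rw [show u ++ [p, q] = (u ++ [p]) ++ [q] by simp]
  simp [List.reverse_append]

lemma removeSTL_of_split {l : List ℕ} {u : List (List ℕ)} {p q : List ℕ}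
    (h : P.blocks l = u ++ [p, q]) : P.removeSTL l = (u ++ [q]).flatten := by
  unfold removeSTL
  rw [h]
  rw [show u ++ [p, q] = (u ++ [p]) ++ [q] by simp]
  simp only [List.reverse_append, List.reverse_cons, List.reverse_nil, List.nil_append,
    List.cons_append, List.singleton_append]
  rw [show (q :: p :: u.reverse).eraseIdx 1 = q :: u.reverse from rfl]
  simp

lemma insertSTL_of_split {r : List ℕ} {u : List (List ℕ)} {q : List ℕ} (t : ℕ)
    (h : P.blocks r = u ++ [q]) :
    P.insertSTL t r = (u ++ [P.type2Block t, q]).flatten := by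
  unfold insertSTL
  rw [h]
  simp only [List.reverse_append, List.reverse_cons, List.reverse_nil, List.nil_append,
    List.singleton_append]
  rw [show (q :: u.reverse).insertIdx 1 (P.type2Block t)
      = q :: P.type2Block t :: u.reverse by
    rw [List.insertIdx_succ_cons, List.insertIdx_zero]]
  have h2 : (q :: P.type2Block t :: u.reverse).reverse = u ++ [P.type2Block t, q] := by
    simp
  rw [h2]

end PLRS
namespace PLRS

variable (P : PLRS)

lemma removeSTL_mem (hnd : ¬(P.L = 1 ∧ P.c 1 = 1)) {n t : ℕ} (hn : 2 * P.L < n)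
    (ht : t < P.size) {l : List ℕ} (hl : l ∈ P.Omega n ∩ {l | P.Z l = t}) :
    P.removeSTL l ∈ P.Omega (n - P.ell t) ∧ P.insertSTL t (P.removeSTL l) = l := by
  have hL := P.L_pos
  obtain ⟨he1, he2, he3, he4⟩ := P.ell_spec ht
  obtain ⟨hlO, hZ⟩ := hl
  rw [Set.mem_setOf_eq] at hZ
  rw [P.Omega_eq hnd n (by omega)] at hlO
  obtain ⟨⟨hleg, hhead⟩, hlen⟩ := hlO
  obtain ⟨hgood, hfl, hne⟩ := P.blocks_of_legal hleg
  have hle := P.flatten_length_le hgood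
  rw [hfl] at hle
  have hlen3 : 3 ≤ (P.blocks l).length := by
    by_contra hc
    push_neg at hc
    have : P.L * (P.blocks l).length ≤ P.L * 2 := Nat.mul_le_mul_left _ (by omega)
    omega
  obtain ⟨u, p, q, hsplit⟩ := two_split (bs := P.blocks l) (by omega)
  have hu_ne : u ≠ [] := by
    intro hc
    rw [hc] at hsplit
    rw [hsplit] at hlen3
    simp at hlen3
  have hstl := P.stl_of_split hsplit
  have hpsum : p.sum = t := by
    rw [← hZ]; unfold Z; rw [hstl]
  have hgood' := hgood
  rw [hsplit, show u ++ [p, q] = (u ++ [p]) ++ [q] by simp] at hgood'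
  obtain ⟨hg1, hg2⟩ := P.Good_snoc.mp hgood'
  have hp2 : P.IsType2Block p := hg1 p (by simp)
  obtain ⟨hpb, hplen⟩ := P.type2_sum_unique hp2 hpsum
  have hrdef := P.removeSTL_of_split hsplit
  have hgq : P.Good (u ++ [q]) :=
    P.Good_snoc.mpr ⟨fun b hb => hg1 b (by simp [hb]), hg2⟩
  have hrleg : P.IsLegal (P.removeSTL l) := by
    rw [hrdef]; exact P.legal_flatten hgq (by simp)
  have hrlen : (P.removeSTL l).length = n - P.ell t := by
    have hx1 : l.length = ((u ++ [p, q]).flatten).length := by rw [← hfl, hsplit]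
    have hx2 : (P.removeSTL l).length = ((u ++ [q]).flatten).length := by rw [hrdef]
    simp only [List.length_flatten, List.map_append, List.sum_append] at hx1 hx2
    simp at hx1 hx2
    omega
  obtain ⟨b0, u', rfl⟩ := List.exists_cons_of_ne_nil hu_ne
  have hb0ne : b0 ≠ [] := P.type2_ne_nil (hg1 b0 (by simp))
  have hrhead : (P.removeSTL l).headI = l.headI := by
    rw [hrdef, ← hfl, hsplit]
    rw [show (b0 :: u') ++ [q] = b0 :: (u' ++ [q]) by simp,
      show (b0 :: u') ++ [p, q] = b0 :: (u' ++ [p, q]) by simp]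
    rw [headI_flatten_cons hb0ne, headI_flatten_cons hb0ne]
  constructor
  · rw [P.Omega_eq hnd (n - P.ell t) (by omega)]
    exact ⟨⟨hrleg, by rw [hrhead]; exact hhead⟩, hrlen⟩
  · have hbr : P.blocks (P.removeSTL l) = (b0 :: u') ++ [q] := by
      rw [hrdef]; exact P.blocks_flatten hgq
    rw [P.insertSTL_of_split t hbr, ← hpb, ← hfl, hsplit]

lemma insertSTL_mem (hnd : ¬(P.L = 1 ∧ P.c 1 = 1)) {n t : ℕ} (hn : 2 * P.L < n)
    (ht : t < P.size) {r : List ℕ} (hr : r ∈ P.Omega (n - P.ell t)) :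
    P.insertSTL t r ∈ P.Omega n ∩ {l | P.Z l = t} ∧ P.removeSTL (P.insertSTL t r) = r := by
  have hL := P.L_pos
  obtain ⟨he1, he2, he3, he4⟩ := P.ell_spec ht
  obtain ⟨hb2, hbsum, hblen⟩ := P.type2Block_is ht
  rw [P.Omega_eq hnd (n - P.ell t) (by omega)] at hr
  obtain ⟨⟨hleg, hhead⟩, hlen⟩ := hr
  obtain ⟨hgood, hfl, hne⟩ := P.blocks_of_legal hleg
  have hle := P.flatten_length_le hgood
  rw [hfl] at hle
  have hlen2 : 2 ≤ (P.blocks r).length := by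
    by_contra hc
    push_neg at hc
    have : P.L * (P.blocks r).length ≤ P.L * 1 := Nat.mul_le_mul_left _ (by omega)
    omega
  obtain ⟨u, q, hsplit⟩ := one_split hne
  have hu_ne : u ≠ [] := by
    intro hc
    rw [hc] at hsplit
    rw [hsplit] at hlen2
    simp at hlen2
  have hins := P.insertSTL_of_split t hsplit
  have hgood' := hgood
  rw [hsplit] at hgood'
  obtain ⟨hg1, hg2⟩ := P.Good_snoc.mp hgood'
  have hgb : P.Good (u ++ [P.type2Block t, q]) := by
    rw [show u ++ [P.type2Block t, q] = (u ++ [P.type2Block t]) ++ [q] by simp]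
    refine P.Good_snoc.mpr ⟨fun b hb => ?_, hg2⟩
    rcases List.mem_append.mp hb with hb' | hb'
    · exact hg1 b hb'
    · simp only [List.mem_singleton] at hb'
      subst hb'
      exact hb2
  have hileg : P.IsLegal (P.insertSTL t r) := by
    rw [hins]; exact P.legal_flatten hgb (by simp)
  have hilen : (P.insertSTL t r).length = n := by
    have hx1 : r.length = ((u ++ [q]).flatten).length := by rw [← hfl, hsplit]
    have hx2 : (P.insertSTL t r).length = ((u ++ [P.type2Block t, q]).flatten).length := by
      rw [hins]
    simp only [List.length_flatten, List.map_append, List.sum_append] at hx1 hx2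
    simp at hx1 hx2
    omega
  obtain ⟨b0, u', rfl⟩ := List.exists_cons_of_ne_nil hu_ne
  have hb0ne : b0 ≠ [] := P.type2_ne_nil (hg1 b0 (by simp))
  have hihead : (P.insertSTL t r).headI = r.headI := by
    rw [hins, ← hfl, hsplit]
    rw [show (b0 :: u') ++ [q] = b0 :: (u' ++ [q]) by simp,
      show (b0 :: u') ++ [P.type2Block t, q] = b0 :: (u' ++ [P.type2Block t, q]) by simp]
    rw [headI_flatten_cons hb0ne, headI_flatten_cons hb0ne]
  have hbi : P.blocks (P.insertSTL t r) = (b0 :: u') ++ [P.type2Block t, q] := by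
    rw [hins]; exact P.blocks_flatten hgb
  refine ⟨⟨?_, ?_⟩, ?_⟩
  · rw [P.Omega_eq hnd n (by omega)]
    exact ⟨⟨hileg, by rw [hihead]; exact hhead⟩, hilen⟩
  · rw [Set.mem_setOf_eq]
    unfold Z
    rw [P.stl_of_split hbi, hbsum]
  · rw [P.removeSTL_of_split hbi, ← hsplit, hfl]

lemma ncard_inter (hnd : ¬(P.L = 1 ∧ P.c 1 = 1)) {n t : ℕ} (hn : 2 * P.L < n)
    (ht : t < P.size) :
    (P.Omega n ∩ {l | P.Z l = t}).ncard = (P.Omega (n - P.ell t)).ncard := by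
  have hbij : Set.BijOn P.removeSTL (P.Omega n ∩ {l | P.Z l = t}) (P.Omega (n - P.ell t)) := by
    refine Set.InvOn.bijOn ⟨fun x hx => ?_, fun y hy => ?_⟩
      (fun x hx => (P.removeSTL_mem hnd hn ht hx).1)
      (fun y hy => (P.insertSTL_mem hnd hn ht hy).1)
    · exact (P.removeSTL_mem hnd hn ht hx).2
    · exact (P.insertSTL_mem hnd hn ht hy).2
  rw [← hbij.image_eq]
  exact (Set.ncard_image_of_injOn hbij.injOn).symm

end PLRS
open PLRS

/-- For `n > 2L` and `0 ≤ t < S`,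
`P(Z_n = t) = (H_{n-ℓ(t)+1} - H_{n-ℓ(t)}) / (H_{n+1} - H_n)`. -/
theorem prob_Z_eq (P : PLRS) (n t : ℕ) (hn : 2 * P.L < n) (ht : t < P.size) :
    P.prob n {l | P.Z l = t} =
      ((P.H (n - P.ell t + 1) : ℝ) - (P.H (n - P.ell t) : ℝ)) /
        ((P.H (n + 1) : ℝ) - (P.H n : ℝ)) := by
  by_cases hnd : P.L = 1 ∧ P.c 1 = 1
  · -- degenerate case: `H` is constantly 1 and `Ω_n` is empty
    have hL : P.L = 1 := hnd.1
    have hH : ∀ m, 1 ≤ m → P.H m = 1 := by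
      intro m hm
      induction m with
      | zero => omega
      | succ m ih =>
          rcases Nat.eq_zero_or_pos m with rfl | hm'
          · exact P.H_one
          · have hr := P.H_rec m (by omega)
            rw [hL] at hr
            rw [hr, Finset.Icc_self, Finset.sum_singleton]
            rw [hnd.2, show m + 1 - 1 = m by omega, ih hm']
    have hO : P.Omega n = ∅ := by
      ext l
      simp only [Omega, Set.mem_setOf_eq, Set.mem_empty_iff_false, iff_false]
      rintro ⟨h1, h2, h3⟩
      rw [hH n (by omega), hH (n + 1) (by omega)] at *
      omega
    obtain ⟨he1, he2, he3, he4⟩ := P.ell_spec ht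
    have h1 : P.H (n - P.ell t + 1) = 1 := hH _ (by omega)
    have h2 : P.H (n - P.ell t) = 1 := hH _ (by omega)
    have h3 : P.H (n + 1) = 1 := hH _ (by omega)
    have h4 : P.H n = 1 := hH _ (by omega)
    rw [prob, hO, h1, h2, h3, h4]
    simp
  · have hL := P.L_pos
    obtain ⟨he1, he2, he3, he4⟩ := P.ell_spec ht
    rw [prob, P.ncard_inter hnd hn ht, P.ncard_Omega hnd (n - P.ell t) (by omega),
      P.ncard_Omega hnd n (by omega)]
    have hm1 : P.H (n - P.ell t) ≤ P.H (n - P.ell t + 1) :=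
      le_of_lt (P.H_lt_succ hnd (by omega))
    have hm2 : P.H n ≤ P.H (n + 1) := le_of_lt (P.H_lt_succ hnd (by omega))
    rw [Nat.cast_sub hm1, Nat.cast_sub hm2]
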